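/- arXiv:2407.02377 — 3 statements merged into one kernel-verified Lean document; each statement's English description precedes it below -/
import Mathlib

section
/- For c ∈ ℝ and t in [0,h], e^{ct} B_{i,p,h}(t) = Σ_{n=0}^{∞} (c^n h^n / n!) (i^{(n)}/p^{(n)}) B_{i+n,p+n,h}(t), with the series converging absolutely. -/
/-- Bernstein polynomial `B_{i,p,h}` on `[0,h]`, with the convention that it
vanishes for indices `i` outside `1 ≤ i ≤ p`. -/
noncomputable def bern (p i : ℕ) (h t : ℝ) : ℝ :=
  if 1 ≤ i ∧ i ≤ p then
    (Nat.choose (p - 1) (i - 1) : ℝ) * (t / h) ^ (i - 1) * ((h - t) / h) ^ (p - i)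
  else 0

/-- Rising factorial `x^{(q)} = x (x+1) ⋯ (x+q-1)`. -/
def rising (x q : ℕ) : ℕ := ∏ k ∈ Finset.range q, (x + k)

lemma rising_succ (x n : ℕ) : rising x (n + 1) = rising x n * (x + n) := by
  simp [rising, Finset.prod_range_succ]

lemma rising_pos (x n : ℕ) (hx : 1 ≤ x) : 0 < rising x n := by
  apply Finset.prod_pos
  intro k _
  omega

lemma rising_choose (p i : ℕ) (hi1 : 1 ≤ i) (hi2 : i ≤ p) (n : ℕ) :
    rising i n * Nat.choose (p + n - 1) (i + n - 1)
      = Nat.choose (p - 1) (i - 1) * rising p n := by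
  induction n with
  | zero => simp [rising]
  | succ n ih =>
    have h1 : p + (n + 1) - 1 = (p + n - 1) + 1 := by omega
    have h2 : i + (n + 1) - 1 = (i + n - 1) + 1 := by omega
    have key := Nat.add_one_mul_choose_eq (p + n - 1) (i + n - 1)
    have h3 : (p + n - 1).succ = p + n := by omega
    have h4 : (i + n - 1).succ = i + n := by omega
    have h5 : p + n - 1 + 1 = p + n := by omega
    have h6 : i + n - 1 + 1 = i + n := by omega
    rw [rising_succ, rising_succ, h1, h2, h5, h6]
    rw [h5, h6] at key
    calc rising i n * (i + n) * Nat.choose (p + n) (i + n)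
        = rising i n * (Nat.choose (p + n) (i + n) * (i + n)) := by ring
      _ = rising i n * ((p + n) * Nat.choose (p + n - 1) (i + n - 1)) := by rw [← key]
      _ = (rising i n * Nat.choose (p + n - 1) (i + n - 1)) * (p + n) := by ring
      _ = Nat.choose (p - 1) (i - 1) * (rising p n * (p + n)) := by rw [ih]; ring

theorem bern_mul_exp_series (p : ℕ) (hp : 1 ≤ p) (i : ℕ) (hi1 : 1 ≤ i) (hi2 : i ≤ p)
    (c : ℝ) (h : ℝ) (hh : 0 < h) (t : ℝ) (ht : t ∈ Set.Icc (0 : ℝ) h) :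
    HasSum
      (fun n : ℕ => c ^ n * h ^ n / (Nat.factorial n : ℝ)
        * ((rising i n : ℝ) / (rising p n : ℝ)) * bern (p + n) (i + n) h t)
      (Real.exp (c * t) * bern p i h t) ∧
    Summable (fun n : ℕ => |c ^ n * h ^ n / (Nat.factorial n : ℝ)
        * ((rising i n : ℝ) / (rising p n : ℝ)) * bern (p + n) (i + n) h t|) := by
  have hne : h ≠ 0 := ne_of_gt hh
  have hterm : ∀ n : ℕ,
      c ^ n * h ^ n / (Nat.factorial n : ℝ)
        * ((rising i n : ℝ) / (rising p n : ℝ)) * bern (p + n) (i + n) h t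
      = (c * t) ^ n / (Nat.factorial n : ℝ) * bern p i h t := by
    intro n
    have hc1 : 1 ≤ i + n ∧ i + n ≤ p + n := ⟨by omega, by omega⟩
    have hc2 : 1 ≤ i ∧ i ≤ p := ⟨hi1, hi2⟩
    have hpn : p + n - (i + n) = p - i := by omega
    have hin : i + n - 1 = (i - 1) + n := by omega
    have hRp : (rising p n : ℝ) ≠ 0 :=
      Nat.cast_ne_zero.2 (rising_pos p n hp).ne'
    have hR : (rising i n : ℝ) / (rising p n : ℝ)
        * (Nat.choose (p + n - 1) (i + n - 1) : ℝ)
        = (Nat.choose (p - 1) (i - 1) : ℝ) := by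
      rw [div_mul_eq_mul_div, div_eq_iff hRp]
      exact_mod_cast rising_choose p i hi1 hi2 n
    have hpow : h ^ n * (t / h) ^ n = t ^ n := by
      rw [div_pow, mul_div_assoc']
      exact mul_div_cancel_left₀ _ (pow_ne_zero n hne)
    simp only [bern, if_pos hc1, if_pos hc2, hpn, hin, pow_add]
    calc c ^ n * h ^ n / (Nat.factorial n : ℝ) * ((rising i n : ℝ) / (rising p n : ℝ))
          * ((Nat.choose (p + n - 1) (i - 1 + n) : ℝ)
            * ((t / h) ^ (i - 1) * (t / h) ^ n) * ((h - t) / h) ^ (p - i))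
        = ((rising i n : ℝ) / (rising p n : ℝ) * (Nat.choose (p + n - 1) (i - 1 + n) : ℝ))
            * (c ^ n * (h ^ n * (t / h) ^ n)) / (Nat.factorial n : ℝ)
            * ((t / h) ^ (i - 1) * ((h - t) / h) ^ (p - i)) := by ring
      _ = (Nat.choose (p - 1) (i - 1) : ℝ) * (c ^ n * t ^ n) / (Nat.factorial n : ℝ)
            * ((t / h) ^ (i - 1) * ((h - t) / h) ^ (p - i)) := by
          rw [hpow, ← hin, hR]
      _ = (c * t) ^ n / (Nat.factorial n : ℝ)
            * ((Nat.choose (p - 1) (i - 1) : ℝ) * (t / h) ^ (i - 1)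
              * ((h - t) / h) ^ (p - i)) := by rw [mul_pow]; ring
  have hexp : HasSum (fun n : ℕ => (c * t) ^ n / (Nat.factorial n : ℝ)) (Real.exp (c * t)) := by
    rw [Real.exp_eq_exp_ℝ]
    exact NormedSpace.expSeries_div_hasSum_exp (c * t)
  constructor
  · simp only [hterm]
    exact hexp.mul_right (bern p i h t)
  · apply Summable.congr
      ((Real.summable_pow_div_factorial |c * t|).mul_right |bern p i h t|)
    intro n
    rw [hterm n]
    simp [abs_mul, abs_div, abs_pow, Nat.abs_cast]
end

section
/- For c ≥ 0, the weighted inner product ∫₀ʰ e^{ct} B_{i,p,h}(t) B_{j,q,h}(t) dt equals h · [C(p-1,i-1) C(q-1,j-1)] / [(p+q-1) C(p+q-2,i+j-2)] · ₁F₁(i+j-1; p+q; ch), where ₁F₁ is Kummer's confluent hypergeometric function. -/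
/-- Kummer confluent hypergeometric function `₁F₁(a; b; z)` for natural parameters. -/
noncomputable def kummer (a b : ℕ) (z : ℝ) : ℝ :=
  ∑' n : ℕ, (rising a n : ℝ) * z ^ n / ((rising b n : ℝ) * (Nat.factorial n : ℝ))

open MeasureTheory intervalIntegral in
lemma beta_nat (h : ℝ) : ∀ (k m : ℕ), ∫ t in (0:ℝ)..h, t ^ m * (h - t) ^ k
    = h ^ (m + k + 1) * ((Nat.factorial m : ℝ) * (Nat.factorial k : ℝ))
      / (Nat.factorial (m + k + 1) : ℝ) := by
  intro k
  induction k with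
  | zero =>
    intro m
    have hm : ((m : ℝ) + 1) ≠ 0 := by positivity
    simp only [pow_zero, mul_one, integral_pow, Nat.add_zero, Nat.factorial_succ,
      Nat.factorial_zero, Nat.cast_one, Nat.cast_mul, Nat.cast_add]
    rw [zero_pow (by omega), sub_zero]
    field_simp
  | succ k ih =>
    intro m
    have key : ∫ t in (0:ℝ)..h,
        (((m:ℝ)+1) * t ^ m * (h - t) ^ (k+1) - ((k:ℝ)+1) * t ^ (m+1) * (h - t) ^ k) = 0 := by
      have hD : ∀ x ∈ Set.uIcc (0:ℝ) h, HasDerivAt (fun t : ℝ => t ^ (m+1) * (h - t) ^ (k+1))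
          (((m:ℝ)+1) * x ^ m * (h - x) ^ (k+1) - ((k:ℝ)+1) * x ^ (m+1) * (h - x) ^ k) x := by
        intro x _
        have h1 : HasDerivAt (fun t : ℝ => t ^ (m+1)) (((m:ℝ)+1) * x ^ m) x := by
          simpa using hasDerivAt_pow (m+1) x
        have h2 : HasDerivAt (fun t : ℝ => (h - t) ^ (k+1))
            (((k:ℝ)+1) * (h - x) ^ k * (-1)) x := by
          have hb : HasDerivAt (fun t : ℝ => h - t) (-1) x := (hasDerivAt_id x).const_sub h
          simpa using hb.fun_pow (k+1)
        have := h1.fun_mul h2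
        refine this.congr_deriv ?_
        ring
      have hcont : Continuous (fun x : ℝ =>
          ((m:ℝ)+1) * x ^ m * (h - x) ^ (k+1) - ((k:ℝ)+1) * x ^ (m+1) * (h - x) ^ k) := by
        fun_prop
      rw [intervalIntegral.integral_eq_sub_of_hasDerivAt hD (hcont.intervalIntegrable 0 h)]
      simp
    have i1 : IntervalIntegrable (fun t : ℝ => t ^ m * (h - t) ^ (k+1)) volume 0 h :=
      (by fun_prop : Continuous fun t : ℝ => t ^ m * (h - t) ^ (k+1)).intervalIntegrable 0 h
    have i2 : IntervalIntegrable (fun t : ℝ => t ^ (m+1) * (h - t) ^ k) volume 0 h :=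
      (by fun_prop : Continuous fun t : ℝ => t ^ (m+1) * (h - t) ^ k).intervalIntegrable 0 h
    have key2 : ((m:ℝ)+1) * ∫ t in (0:ℝ)..h, t ^ m * (h - t) ^ (k+1)
        = ((k:ℝ)+1) * ∫ t in (0:ℝ)..h, t ^ (m+1) * (h - t) ^ k := by
      have := intervalIntegral.integral_sub (i1.const_mul (((m:ℝ)+1))) (i2.const_mul (((k:ℝ)+1)))
      rw [intervalIntegral.integral_const_mul, intervalIntegral.integral_const_mul] at this
      have h0 : (∫ t in (0:ℝ)..h,
          (((m:ℝ)+1) * (t ^ m * (h - t) ^ (k+1)) - ((k:ℝ)+1) * (t ^ (m+1) * (h - t) ^ k))) = 0 := by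
        rw [← key]; congr 1; funext t; ring
      rw [h0] at this
      linarith
    have hm : ((m : ℝ) + 1) ≠ 0 := by positivity
    have : (∫ t in (0:ℝ)..h, t ^ m * (h - t) ^ (k+1))
        = ((k:ℝ)+1) * (∫ t in (0:ℝ)..h, t ^ (m+1) * (h - t) ^ k) / ((m:ℝ)+1) := by
      field_simp
      linarith [key2]
    rw [this, ih (m+1)]
    have e1 : m + 1 + k + 1 = m + (k+1) + 1 := by omega
    rw [e1]
    have hne : (Nat.factorial (m + (k+1) + 1) : ℝ) ≠ 0 := by positivity
    rw [Nat.factorial_succ m, Nat.factorial_succ k]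
    push_cast
    field_simp

lemma rising_mul_factorial (a : ℕ) (ha : 1 ≤ a) (n : ℕ) :
    (rising a n) * Nat.factorial (a - 1) = Nat.factorial (a - 1 + n) := by
  induction n with
  | zero => simp [rising]
  | succ n ih =>
    rw [rising, Finset.prod_range_succ, ← rising]
    have e : a - 1 + (n+1) = (a - 1 + n) + 1 := by omega
    rw [e, Nat.factorial_succ, ← ih]
    have e2 : a + n = a - 1 + n + 1 := by omega
    rw [e2]; ring

lemma rising_pos_s12 (a n : ℕ) (ha : 1 ≤ a) : 0 < rising a n :=
  Finset.prod_pos fun k _ => by omega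

open MeasureTheory intervalIntegral in
lemma core (m k : ℕ) (c : ℝ) (hc : 0 ≤ c) (h : ℝ) (hh : 0 < h) :
    ∫ t in (0:ℝ)..h, Real.exp (c*t) * (t^m * (h-t)^k)
      = h^(m+k+1) * ((Nat.factorial m : ℝ) * (Nat.factorial k : ℝ)) / (Nat.factorial (m+k+1) : ℝ)
        * kummer (m+1) (m+k+2) (c*h) := by
  set F : ℕ → ℝ → ℝ := fun n t => (c^n / (Nat.factorial n : ℝ)) * (t^(n+m) * (h-t)^k) with hF
  have hFc : ∀ n, Continuous (F n) := by intro n; fun_prop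
  have hexp : ∀ t : ℝ, Real.exp (c*t) * (t^m*(h-t)^k) = ∑' n, F n t := by
    intro t
    rw [Real.exp_eq_exp_ℝ, NormedSpace.exp_eq_tsum_div, ← tsum_mul_right]
    exact tsum_congr fun n => by simp only [hF, mul_pow]; ring
  have hInt : ∀ n, ∫ t in (0:ℝ)..h, F n t
      = (c^n / (Nat.factorial n : ℝ)) * (h^(n+m+k+1)
          * ((Nat.factorial (n+m) : ℝ) * (Nat.factorial k : ℝ)) / (Nat.factorial (n+m+k+1) : ℝ)) := by
    intro n
    rw [hF]
    rw [intervalIntegral.integral_const_mul, beta_nat h k (n+m)]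
  have hIoc : ∀ n, ∫ t in Set.Ioc (0:ℝ) h, F n t = ∫ t in (0:ℝ)..h, F n t := fun n =>
    (intervalIntegral.integral_of_le hh.le).symm
  have hnonneg : ∀ n, ∀ t ∈ Set.Ioc (0:ℝ) h, 0 ≤ F n t := by
    intro n t ht
    have h1 : (0:ℝ) ≤ t := le_of_lt ht.1
    have h2 : (0:ℝ) ≤ h - t := by linarith [ht.2]
    have : (0:ℝ) ≤ c ^ n := pow_nonneg hc n
    positivity
  have hIntOn : ∀ n, Integrable (F n) (volume.restrict (Set.Ioc (0:ℝ) h)) := fun n =>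
    (hFc n).integrableOn_Ioc
  have hsum : Summable fun n => ∫ t in Set.Ioc (0:ℝ) h, ‖F n t‖ := by
    have heq : ∀ n, ∫ t in Set.Ioc (0:ℝ) h, ‖F n t‖ = ∫ t in Set.Ioc (0:ℝ) h, F n t := by
      intro n
      refine setIntegral_congr_fun measurableSet_Ioc fun t ht => ?_
      exact Real.norm_of_nonneg (hnonneg n t ht)
    rw [funext heq]
    have hbound : ∀ n : ℕ, ∫ t in Set.Ioc (0:ℝ) h, F n t
        ≤ (h^(m+k+1) * (Nat.factorial k : ℝ)) * ((c*h)^n / (Nat.factorial n : ℝ)) := by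
      intro n
      rw [hIoc n, hInt n]
      have hfle : (Nat.factorial (n+m) : ℝ) / (Nat.factorial (n+m+k+1) : ℝ) ≤ 1 := by
        rw [div_le_one (by positivity)]
        exact_mod_cast Nat.factorial_le (by omega)
      have hrw : (c^n / (Nat.factorial n : ℝ)) * (h^(n+m+k+1)
            * ((Nat.factorial (n+m) : ℝ) * (Nat.factorial k : ℝ)) / (Nat.factorial (n+m+k+1) : ℝ))
          = ((h^(m+k+1) * (Nat.factorial k : ℝ)) * ((c*h)^n / (Nat.factorial n : ℝ)))
            * ((Nat.factorial (n+m) : ℝ) / (Nat.factorial (n+m+k+1) : ℝ)) := by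
        have hn : (Nat.factorial n : ℝ) ≠ 0 := by positivity
        have hn2 : (Nat.factorial (n+m+k+1) : ℝ) ≠ 0 := by positivity
        field_simp
        ring
      rw [hrw]
      have hpos : (0:ℝ) ≤ (h^(m+k+1) * (Nat.factorial k : ℝ)) * ((c*h)^n / (Nat.factorial n : ℝ)) := by
        have : (0:ℝ) ≤ c * h := mul_nonneg hc hh.le
        positivity
      nlinarith [mul_le_of_le_one_right hpos hfle]
    refine Summable.of_nonneg_of_le (fun n => ?_) hbound
      (((Real.summable_pow_div_factorial (c*h))).mul_left _)
    · rw [hIoc n]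
      rw [intervalIntegral.integral_of_le hh.le]
      exact setIntegral_nonneg measurableSet_Ioc (hnonneg n)
  calc ∫ t in (0:ℝ)..h, Real.exp (c*t) * (t^m * (h-t)^k)
      = ∫ t in Set.Ioc (0:ℝ) h, ∑' n, F n t := by
        rw [intervalIntegral.integral_of_le hh.le]
        exact setIntegral_congr_fun measurableSet_Ioc fun t _ => hexp t
    _ = ∑' n, ∫ t in Set.Ioc (0:ℝ) h, F n t :=
        (integral_tsum_of_summable_integral_norm hIntOn hsum).symm
    _ = h^(m+k+1) * ((Nat.factorial m : ℝ) * (Nat.factorial k : ℝ)) / (Nat.factorial (m+k+1) : ℝ)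
        * kummer (m+1) (m+k+2) (c*h) := by
        rw [kummer, ← tsum_mul_left]
        refine tsum_congr fun n => ?_
        rw [hIoc n, hInt n]
        have r1 : ((rising (m+1) n : ℕ) : ℝ) * (Nat.factorial m : ℝ) = (Nat.factorial (m+n) : ℝ) := by
          exact_mod_cast congrArg (Nat.cast : ℕ → ℝ) (rising_mul_factorial (m+1) (by omega) n)
        have r2 : ((rising (m+k+2) n : ℕ) : ℝ) * (Nat.factorial (m+k+1) : ℝ)
            = (Nat.factorial (m+k+1+n) : ℝ) := by
          exact_mod_cast congrArg (Nat.cast : ℕ → ℝ) (rising_mul_factorial (m+k+2) (by omega) n)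
        have e1 : n + m = m + n := by omega
        have e2 : m + n + k + 1 = m + k + 1 + n := by omega
        rw [e1, e2, ← r1, ← r2]
        have hn : (Nat.factorial n : ℝ) ≠ 0 := by positivity
        have h1 : (Nat.factorial (m+k+1) : ℝ) ≠ 0 := by positivity
        have h2 : ((rising (m+k+2) n : ℕ) : ℝ) ≠ 0 := by
          exact_mod_cast Nat.pos_iff_ne_zero.mp (rising_pos_s12 (m+k+2) n (by omega))
        field_simp
        ring

theorem bern_weighted_inner (p q : ℕ) (hp : 1 ≤ p) (hq : 1 ≤ q) (i j : ℕ)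
    (hi1 : 1 ≤ i) (hi2 : i ≤ p) (hj1 : 1 ≤ j) (hj2 : j ≤ q)
    (c : ℝ) (hc : 0 ≤ c) (h : ℝ) (hh : 0 < h) :
    ∫ t in (0 : ℝ)..h, Real.exp (c * t) * bern p i h t * bern q j h t =
      h * ((Nat.choose (p - 1) (i - 1) : ℝ) * (Nat.choose (q - 1) (j - 1) : ℝ))
          / (((p : ℝ) + q - 1) * (Nat.choose (p + q - 2) (i + j - 2) : ℝ))
        * kummer (i + j - 1) (p + q) (c * h) := by
  set m := i + j - 2 with hm
  set k := p + q - i - j with hk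
  set K := (Nat.choose (p - 1) (i - 1) : ℝ) * (Nat.choose (q - 1) (j - 1) : ℝ) with hK
  have hh' : h ≠ 0 := ne_of_gt hh
  have hbern : ∀ t : ℝ, Real.exp (c * t) * bern p i h t * bern q j h t
      = (K / h ^ (m + k)) * (Real.exp (c * t) * (t ^ m * (h - t) ^ k)) := by
    intro t
    simp only [bern, if_pos (⟨hi1, hi2⟩ : 1 ≤ i ∧ i ≤ p),
      if_pos (⟨hj1, hj2⟩ : 1 ≤ j ∧ j ≤ q), div_pow, hK]
    have e1 : t ^ m = t ^ (i - 1) * t ^ (j - 1) := by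
      rw [← pow_add]; congr 1; omega
    have e2 : (h - t) ^ k = (h - t) ^ (p - i) * (h - t) ^ (q - j) := by
      rw [← pow_add]; congr 1; omega
    have e3 : h ^ (m + k) = h ^ (i - 1) * h ^ (j - 1) * (h ^ (p - i) * h ^ (q - j)) := by
      rw [← pow_add, ← pow_add, ← pow_add]; congr 1; omega
    rw [e1, e2, e3]
    field_simp
  rw [show (fun t => Real.exp (c * t) * bern p i h t * bern q j h t)
      = fun t => (K / h ^ (m + k)) * (Real.exp (c * t) * (t ^ m * (h - t) ^ k))
      from funext hbern]
  rw [intervalIntegral.integral_const_mul, core m k c hc h hh]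
  have ea : i + j - 1 = m + 1 := by omega
  have eb : p + q = m + k + 2 := by omega
  rw [ea, eb, show m + k + 2 - 2 = m + k from by omega]
  have hpq : (p : ℝ) + q - 1 = ((m + k + 1 : ℕ) : ℝ) := by
    have := congrArg (Nat.cast : ℕ → ℝ) eb
    push_cast at this ⊢
    linarith
  rw [hpq]
  have hch : (Nat.choose (m + k) m : ℝ) * (Nat.factorial m : ℝ) * (Nat.factorial k : ℝ)
      = (Nat.factorial (m + k) : ℝ) := by
    exact_mod_cast congrArg (Nat.cast : ℕ → ℝ)
      (by simpa using Nat.choose_mul_factorial_mul_factorial (Nat.le_add_right m k))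
  have hfs : (Nat.factorial (m + k + 1) : ℝ) = ((m + k + 1 : ℕ) : ℝ) * (Nat.factorial (m + k) : ℝ) := by
    rw [Nat.factorial_succ]; push_cast; ring
  have hc0 : (Nat.choose (m + k) m : ℝ) ≠ 0 := by
    exact_mod_cast Nat.pos_iff_ne_zero.mp (Nat.choose_pos (Nat.le_add_right m k))
  have hf1 : (Nat.factorial (m + k + 1) : ℝ) ≠ 0 := by positivity
  have hmk1 : ((m + k + 1 : ℕ) : ℝ) ≠ 0 := by positivity
  rw [hfs, ← hch]
  have hpow : h ^ (m + k + 1) = h ^ (m + k) * h := by rw [pow_succ]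
  rw [hpow]
  have hhp : (h : ℝ) ^ (m + k) ≠ 0 := pow_ne_zero _ hh'
  field_simp
end

section
/- The function g(t) = 2t(10 - t²)/(20 + 3t²) - sin t satisfies g(t) = -t³/12 + O(t⁵) as t → 0; i.e., there exist C, δ > 0 with |g(t) + t³/12| ≤ C t⁵ for |t| ≤ δ. -/
/-- Fifth-order Taylor bound for sine, obtained by integrating `Real.cos_bound`. -/
lemma sin_bound5 {t : ℝ} (ht : |t| ≤ 1) :
    |Real.sin t - (t - t ^ 3 / 6)| ≤ |t| ^ 5 * (5 / 96) := by
  have hderiv : ∀ x ∈ Set.uIcc (0:ℝ) t,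
      HasDerivAt (fun x : ℝ => Real.sin x - (x - x ^ 3 / 6))
        (Real.cos x - (1 - x ^ 2 / 2)) x := by
    intro x _
    have h1 : HasDerivAt Real.sin (Real.cos x) x := Real.hasDerivAt_sin x
    have h2 : HasDerivAt (fun x : ℝ => x - x ^ 3 / 6) (1 - 3 * x ^ 2 / 6) x := by
      have := ((hasDerivAt_id x).sub (((hasDerivAt_pow 3 x)).div_const 6))
      simpa [Pi.sub_def] using this
    have := h1.sub h2
    exact this.congr_deriv (by ring)
  have hint : IntervalIntegrable (fun x : ℝ => Real.cos x - (1 - x ^ 2 / 2))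
      MeasureTheory.volume 0 t := by
    apply Continuous.intervalIntegrable
    continuity
  have heq : (∫ x in (0:ℝ)..t, (Real.cos x - (1 - x ^ 2 / 2))) =
      (Real.sin t - (t - t ^ 3 / 6)) - (Real.sin 0 - (0 - 0 ^ 3 / 6)) :=
    intervalIntegral.integral_eq_sub_of_hasDerivAt hderiv hint
  have heq' : (∫ x in (0:ℝ)..t, (Real.cos x - (1 - x ^ 2 / 2))) =
      Real.sin t - (t - t ^ 3 / 6) := by
    rw [heq]; simp
  have hbound : ‖∫ x in (0:ℝ)..t, (Real.cos x - (1 - x ^ 2 / 2))‖ ≤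
      |t| ^ 4 * (5 / 96) * |t - 0| := by
    apply intervalIntegral.norm_integral_le_of_norm_le_const
    intro x hx
    have hx' : |x| ≤ |t| := by
      rcases hx.1.le, hx.2 with ⟨h1, h2⟩
      rcases le_total 0 t with h | h
      · rw [abs_le]
        constructor
        · calc -|t| ≤ 0 := neg_nonpos.2 (abs_nonneg t)
            _ ≤ x := by simpa [h] using hx.1.le
        · calc x ≤ max 0 t := hx.2
            _ = t := max_eq_right h
            _ ≤ |t| := le_abs_self t
      · rw [abs_le]
        constructor
        · calc -|t| = t := by rw [abs_of_nonpos h]; ring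
            _ = min 0 t := (min_eq_right h).symm
            _ ≤ x := hx.1.le
        · calc x ≤ max 0 t := hx.2
            _ = 0 := max_eq_left h
            _ ≤ |t| := abs_nonneg t
    have hx1 : |x| ≤ 1 := hx'.trans ht
    calc ‖Real.cos x - (1 - x ^ 2 / 2)‖ = |Real.cos x - (1 - x ^ 2 / 2)| := rfl
      _ ≤ |x| ^ 4 * (5 / 96) := Real.cos_bound hx1
      _ ≤ |t| ^ 4 * (5 / 96) := by
          gcongr
  rw [heq'] at hbound
  calc |Real.sin t - (t - t ^ 3 / 6)| ≤ |t| ^ 4 * (5 / 96) * |t - 0| := hbound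
    _ = |t| ^ 5 * (5 / 96) := by rw [sub_zero]; ring

theorem velocity_error_expansion :
    ∃ C δ : ℝ, 0 < C ∧ 0 < δ ∧ ∀ t : ℝ, |t| ≤ δ →
      |(2 * t * (10 - t ^ 2) / (20 + 3 * t ^ 2) - Real.sin t) + t ^ 3 / 12| ≤ C * |t| ^ 5 := by
  refine ⟨1, 1, one_pos, one_pos, fun t ht => ?_⟩
  have hden : (20 : ℝ) + 3 * t ^ 2 > 0 := by positivity
  have hne : (20 : ℝ) + 3 * t ^ 2 ≠ 0 := ne_of_gt hden
  have key : (2 * t * (10 - t ^ 2) / (20 + 3 * t ^ 2) - Real.sin t) + t ^ 3 / 12 =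
      3 * t ^ 5 / (4 * (20 + 3 * t ^ 2)) - (Real.sin t - (t - t ^ 3 / 6)) := by
    field_simp
    ring
  rw [key]
  have h1 : |3 * t ^ 5 / (4 * (20 + 3 * t ^ 2))| ≤ 3 / 80 * |t| ^ 5 := by
    rw [abs_div]
    have hd : |4 * (20 + 3 * t ^ 2)| = 4 * (20 + 3 * t ^ 2) := abs_of_pos (by positivity)
    rw [hd]
    rw [div_le_iff₀ (by positivity)]
    have : |3 * t ^ 5| = 3 * |t| ^ 5 := by
      rw [abs_mul, abs_pow]; norm_num
    rw [this]
    nlinarith [abs_nonneg t, pow_nonneg (abs_nonneg t) 5, sq_nonneg t]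
  have h2 : |Real.sin t - (t - t ^ 3 / 6)| ≤ |t| ^ 5 * (5 / 96) := sin_bound5 ht
  calc |3 * t ^ 5 / (4 * (20 + 3 * t ^ 2)) - (Real.sin t - (t - t ^ 3 / 6))|
      ≤ |3 * t ^ 5 / (4 * (20 + 3 * t ^ 2))| + |Real.sin t - (t - t ^ 3 / 6)| :=
        abs_sub _ _
    _ ≤ 3 / 80 * |t| ^ 5 + |t| ^ 5 * (5 / 96) := add_le_add h1 h2
    _ ≤ 1 * |t| ^ 5 := by nlinarith [pow_nonneg (abs_nonneg t) 5]
end
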